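/- arXiv:1912.04738 — 2 statements merged into one kernel-verified Lean document; each statement's English description precedes it below -/
import Mathlib

section
/- The entropy-covering equivalence (second direction): if ln N(T, d, ε) < (a/ε)^q for all ε > 0 (for constants a > 0, q > 0), then e_i(T, d) ≤ 3^{1/q}·a·i^{-1/q} for all i ≥ 1. -/
/-- `T` is coverable by `n` closed balls of radius `ε`. -/
def coverable {X : Type*} [PseudoMetricSpace X] (T : Set X) (ε : ℝ) (n : ℕ) : Prop :=
  ∃ c : Finset X, c.card ≤ n ∧ T ⊆ ⋃ x ∈ c, Metric.closedBall x ε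

/-- Covering numbers bound entropy numbers: if `ln N(T,d,ε) < (a/ε)^q` for all `ε > 0`,
then `e_i(T,d) ≤ 3^{1/q} a i^{-1/q}` for all `i ≥ 1`. -/
theorem stmt6 {X : Type*} [PseudoMetricSpace X] (T : Set X) (a q : ℝ)
    (ha : 0 < a) (hq : 0 < q)
    (h : ∀ ε : ℝ, 0 < ε → ∃ c : Finset X, (c.card : ℝ) < Real.exp ((a / ε) ^ q) ∧
      T ⊆ ⋃ x ∈ c, Metric.closedBall x ε) :
    ∀ i : ℕ, 1 ≤ i → ∀ ε : ℝ, (3 : ℝ) ^ (1/q) * a * (i : ℝ) ^ (-(1/q)) < ε →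
      coverable T ε (2 ^ (i - 1)) := by
  intro i hi ε hε
  have hipos : (0:ℝ) < (i:ℝ) := by exact_mod_cast hi
  have h3 : (0:ℝ) < (3:ℝ) ^ (1/q) := Real.rpow_pos_of_pos (by norm_num) _
  have hip : (0:ℝ) < (i:ℝ) ^ (-(1/q)) := Real.rpow_pos_of_pos hipos _
  have hε0 : 0 < ε := lt_trans (by positivity) hε
  obtain ⟨c, hcard, hcov⟩ := h ε hε0
  refine ⟨c, ?_, hcov⟩
  -- s := (i/3)^(1/q)
  set s : ℝ := ((i:ℝ)/3) ^ (1/q) with hs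
  have hspos : 0 < s := Real.rpow_pos_of_pos (by positivity) _
  have hseq : s * ((3:ℝ) ^ (1/q) * a * (i:ℝ) ^ (-(1/q))) = a := by
    rw [hs, Real.div_rpow hipos.le (by norm_num), Real.rpow_neg hipos.le]
    have h1 : (0:ℝ) < (i:ℝ) ^ (1/q) := Real.rpow_pos_of_pos hipos _
    field_simp
  have h1 : a / ε < s := by
    rw [div_lt_iff₀ hε0, ← hseq]
    exact (mul_lt_mul_iff_right₀ hspos).2 hε
  have key : (a / ε) ^ q < (i:ℝ)/3 := by
    have := Real.rpow_lt_rpow (div_nonneg ha.le hε0.le) h1 hq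
    rwa [hs, ← Real.rpow_mul (by positivity : (0:ℝ) ≤ (i:ℝ)/3),
      one_div_mul_cancel hq.ne', Real.rpow_one] at this
  have hce : (c.card : ℝ) < Real.exp ((i:ℝ)/3) :=
    lt_trans hcard (Real.exp_lt_exp.2 key)
  have hlog := Real.log_two_gt_d9
  have hbound : Real.exp ((i:ℝ)/3) ≤ ((2 ^ (i-1) : ℕ) : ℝ) + 1 := by
    rcases eq_or_lt_of_le hi with hi1 | hi2
    · have : i = 1 := hi1.symm
      subst this
      norm_num
      have : Real.exp ((1:ℝ)/3) < Real.exp (Real.log 2) :=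
        Real.exp_lt_exp.2 (by linarith)
      rw [Real.exp_log (by norm_num)] at this
      linarith
    · have hi2' : (2:ℕ) ≤ i := hi2
      have hcast : ((i - 1 : ℕ) : ℝ) = (i:ℝ) - 1 := by
        rw [Nat.cast_sub hi]; norm_num
      have hir : (2:ℝ) ≤ (i:ℝ) := by exact_mod_cast hi2'
      have h2 : Real.exp ((i:ℝ)/3) ≤ Real.exp (Real.log 2 * ((i - 1 : ℕ) : ℝ)) := by
        apply Real.exp_le_exp.2
        rw [hcast]
        nlinarith
      have h3' : Real.exp (Real.log 2 * ((i - 1 : ℕ) : ℝ)) = ((2 ^ (i-1) : ℕ) : ℝ) := by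
        rw [← Real.rpow_def_of_pos (by norm_num : (0:ℝ) < 2), Real.rpow_natCast]
        push_cast; ring
      rw [h3'] at h2
      linarith
  have : c.card < 2 ^ (i-1) + 1 := by
    exact_mod_cast lt_of_lt_of_le hce hbound
  omega
end

section
/- Covering number of a direct sum of RKHSs: let A, B ⊂ X be disjoint, H_A and H_B be RKHSs of functions on A and B (extended by zero to X) embedded in L₂(P_{X|A}) and L₂(P_{X|B}) respectively, and let H = Ĥ_A + Ĥ_B with norm ‖f‖²_H = λ_A‖f̂_A‖² + λ_B‖f̂_B‖² for λ_A, λ_B > 0. Then for ε_A, ε_B > 0 and ε = (ε_A² + ε_B²)^{1/2}, N(B_H, ‖·‖_{L₂(P_X)}, ε) ≤ N(λ_A^{-1/2} B_{Ĥ_A}, ‖·‖_{L₂(P_{X|A})}, ε_A) · N(λ_B^{-1/2} B_{Ĥ_B}, ‖·‖_{L₂(P_{X|B})}, ε_B). -/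
open MeasureTheory

/-- `T` is coverable, w.r.t. a distance-like function `D`, by `n` balls of radius `ε`. -/
def coverableD {F : Type*} (D : F → F → ℝ) (T : Set F) (ε : ℝ) (n : ℕ) : Prop :=
  ∃ c : Finset F, c.card ≤ n ∧ ∀ f ∈ T, ∃ g ∈ c, D f g ≤ ε

/-- Covering number of a direct sum of (zero-extended) RKHSs: if every `f` in the unit ball
`B_H` decomposes as `f = λ_A^{-1/2} g_A + λ_B^{-1/2} g_B` with `g_A ∈ U_A` supported in `A`
and `g_B ∈ U_B` supported in `B`, then an `ε_A`-cover of `λ_A^{-1/2}U_A` in `L₂(P|_A)` and an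
`ε_B`-cover of `λ_B^{-1/2}U_B` in `L₂(P|_B)` yield a `(ε_A² + ε_B²)^{1/2}`-cover of `B_H` in
`L₂(P)` of product cardinality. -/
theorem stmt19 {X : Type*} [MeasurableSpace X] (P : Measure X) [IsProbabilityMeasure P]
    (A B : Set X) (hAmeas : MeasurableSet A) (hBmeas : MeasurableSet B) (hAB : Disjoint A B)
    (lamA lamB : ℝ) (hlamA : 0 < lamA) (hlamB : 0 < lamB)
    (UA UB BH : Set (X → ℝ))
    (hUA : ∀ g ∈ UA, ∀ x ∉ A, g x = 0)
    (hUB : ∀ g ∈ UB, ∀ x ∉ B, g x = 0)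
    (hdecomp : ∀ f ∈ BH, ∃ gA ∈ UA, ∃ gB ∈ UB,
        f = (Real.sqrt lamA)⁻¹ • gA + (Real.sqrt lamB)⁻¹ • gB)
    (DA DB DX : (X → ℝ) → (X → ℝ) → ℝ)
    (hDA : ∀ f g, DA f g = Real.sqrt (∫ x in A, (f x - g x) ^ 2 ∂P))
    (hDB : ∀ f g, DB f g = Real.sqrt (∫ x in B, (f x - g x) ^ 2 ∂P))
    (hDX : ∀ f g, DX f g = Real.sqrt (∫ x, (f x - g x) ^ 2 ∂P))
    (εA εB : ℝ) (hεA : 0 < εA) (hεB : 0 < εB) (nA nB : ℕ)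
    (hcovA : coverableD DA ((fun g => (Real.sqrt lamA)⁻¹ • g) '' UA) εA nA)
    (hcovB : coverableD DB ((fun g => (Real.sqrt lamB)⁻¹ • g) '' UB) εB nB) :
    coverableD DX BH (Real.sqrt (εA ^ 2 + εB ^ 2)) (nA * nB) := by
  classical
  obtain ⟨cA, hcAcard, hcA⟩ := hcovA
  obtain ⟨cB, hcBcard, hcB⟩ := hcovB
  refine ⟨(cA ×ˢ cB).image (fun pq => A.indicator pq.1 + B.indicator pq.2), ?_, ?_⟩
  · refine Finset.card_image_le.trans ?_
    rw [Finset.card_product]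
    exact Nat.mul_le_mul hcAcard hcBcard
  intro f hf
  obtain ⟨gA, hgA, gB, hgB, hfeq⟩ := hdecomp f hf
  set a : X → ℝ := (Real.sqrt lamA)⁻¹ • gA with ha
  set b : X → ℝ := (Real.sqrt lamB)⁻¹ • gB with hb
  have ha0 : ∀ x ∉ A, a x = 0 := by
    intro x hx; simp [ha, hUA gA hgA x hx]
  have hb0 : ∀ x ∉ B, b x = 0 := by
    intro x hx; simp [hb, hUB gB hgB x hx]
  obtain ⟨p, hp, hpd⟩ := hcA a ⟨gA, hgA, rfl⟩
  obtain ⟨q, hq, hqd⟩ := hcB b ⟨gB, hgB, rfl⟩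
  set g : X → ℝ := A.indicator p + B.indicator q with hg
  refine ⟨g, Finset.mem_image.mpr ⟨(p, q), Finset.mem_product.mpr ⟨hp, hq⟩, rfl⟩, ?_⟩
  rw [hDX]
  -- the integrand
  set h : X → ℝ := fun x => (f x - g x) ^ 2 with hh
  have hnotB : ∀ x ∈ A, x ∉ B := fun x hx => Set.disjoint_left.mp hAB hx
  have hnotA : ∀ x ∈ B, x ∉ A := fun x hx => Set.disjoint_right.mp hAB hx
  have heqA : Set.EqOn h (fun x => (a x - p x) ^ 2) A := by
    intro x hx
    have hfx : f x = a x + b x := by rw [hfeq]; rfl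
    simp [hh, hg, hfx, hb0 x (hnotB x hx), Set.indicator_of_mem hx,
      Set.indicator_of_notMem (hnotB x hx)]
  have heqB : Set.EqOn h (fun x => (b x - q x) ^ 2) B := by
    intro x hx
    have hfx : f x = a x + b x := by rw [hfeq]; rfl
    simp [hh, hg, hfx, ha0 x (hnotA x hx), Set.indicator_of_mem hx,
      Set.indicator_of_notMem (hnotA x hx)]
  have hzero : ∀ x ∉ A ∪ B, h x = 0 := by
    intro x hx
    have hxA : x ∉ A := fun h' => hx (Or.inl h')
    have hxB : x ∉ B := fun h' => hx (Or.inr h')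
    have hfx : f x = a x + b x := by rw [hfeq]; rfl
    simp [hh, hg, hfx, ha0 x hxA, hb0 x hxB,
      Set.indicator_of_notMem hxA, Set.indicator_of_notMem hxB]
  -- bounds on the set integrals
  have sqbound : ∀ (S : Set X) (u : X → ℝ) (ε : ℝ), 0 ≤ ε →
      Real.sqrt (∫ x in S, (u x) ^ 2 ∂P) ≤ ε → (∫ x in S, (u x) ^ 2 ∂P) ≤ ε ^ 2 := by
    intro S u ε hε hle
    have hI : 0 ≤ ∫ x in S, (u x) ^ 2 ∂P :=
      integral_nonneg (fun x => sq_nonneg _)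
    calc (∫ x in S, (u x) ^ 2 ∂P) = Real.sqrt (∫ x in S, (u x) ^ 2 ∂P) ^ 2 :=
          (Real.sq_sqrt hI).symm
      _ ≤ ε ^ 2 := pow_le_pow_left₀ (Real.sqrt_nonneg _) hle 2
  have hIA : (∫ x in A, h x ∂P) ≤ εA ^ 2 := by
    rw [setIntegral_congr_fun hAmeas heqA]
    exact sqbound A (fun x => a x - p x) εA hεA.le (by rw [hDA] at hpd; exact hpd)
  have hIB : (∫ x in B, h x ∂P) ≤ εB ^ 2 := by
    rw [setIntegral_congr_fun hBmeas heqB]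
    exact sqbound B (fun x => b x - q x) εB hεB.le (by rw [hDB] at hqd; exact hqd)
  by_cases hint : Integrable h P
  · have hind : h = (A ∪ B).indicator h := by
      funext x
      by_cases hx : x ∈ A ∪ B
      · rw [Set.indicator_of_mem hx]
      · rw [Set.indicator_of_notMem hx, hzero x hx]
    have hsplit : (∫ x, h x ∂P) = (∫ x in A, h x ∂P) + (∫ x in B, h x ∂P) := by
      conv_lhs => rw [hind]
      rw [integral_indicator (hAmeas.union hBmeas)]
      exact setIntegral_union hAB hBmeas (hint.integrableOn) (hint.integrableOn)
    refine Real.sqrt_le_sqrt ?_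
    rw [hsplit]
    exact add_le_add hIA hIB
  · rw [integral_undef hint, Real.sqrt_zero]
    exact Real.sqrt_nonneg _
end
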